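/- For any S₁, S₂ ∈ Sym⁺(m), the curve γ(t) defined as the unique element of Sym⁺(m) satisfying chol(L(γ(t))) = (1−t)·chol(L(S₁)) + t·chol(L(S₂)), t ∈ [0,1], satisfies γ(0) = S₁, γ(1) = S₂, and d_LC(γ(s), γ(t)) = |s − t| · d_LC(S₁, S₂) for all s, t ∈ [0,1]; hence (Sym⁺(m), d_LC) is a geodesic metric space. -/

import Mathlib

open Matrix Set

/-- The Frobenius norm of an `m × m` real matrix. -/
noncomputable def frobNorm {m : ℕ} (A : Matrix (Fin m) (Fin m) ℝ) : ℝ :=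
  Real.sqrt (∑ i, ∑ j, (A i j) ^ 2)

/-- For a lower triangular matrix `L`, `chol(L) := ⌊L⌋ + mlog(𝔻(L))` is the sum of the strictly
lower triangular part of `L` and the diagonal matrix whose `k`-th diagonal entry is
`log(L k k)`. -/
noncomputable def cholMap {m : ℕ} (L : Matrix (Fin m) (Fin m) ℝ) : Matrix (Fin m) (Fin m) ℝ :=
  Matrix.of fun i j => if j < i then L i j else if i = j then Real.log (L i i) else 0

/-- Inverse of `cholMap` on lower-triangular matrices: exponentiate the diagonal. -/
noncomputable def expMap {m : ℕ} (C : Matrix (Fin m) (Fin m) ℝ) : Matrix (Fin m) (Fin m) ℝ :=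
  Matrix.of fun i j => if j < i then C i j else if i = j then Real.exp (C i i) else 0

lemma expMap_lower {m : ℕ} (C : Matrix (Fin m) (Fin m) ℝ) (i j : Fin m) (hij : i < j) :
    expMap C i j = 0 := by
  simp [expMap, not_lt_of_gt hij, hij.ne]

lemma expMap_diag_pos {m : ℕ} (C : Matrix (Fin m) (Fin m) ℝ) (i : Fin m) :
    0 < expMap C i i := by
  simp [expMap, Real.exp_pos]

lemma cholMap_upper {m : ℕ} (L : Matrix (Fin m) (Fin m) ℝ) (i j : Fin m) (hij : i < j) :
    cholMap L i j = 0 := by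
  simp [cholMap, not_lt_of_gt hij, hij.ne]

lemma cholMap_expMap {m : ℕ} (C : Matrix (Fin m) (Fin m) ℝ)
    (hC : ∀ i j : Fin m, i < j → C i j = 0) : cholMap (expMap C) = C := by
  ext i j
  rcases lt_trichotomy j i with h | h | h
  · simp [cholMap, expMap, h]
  · subst h; simp [cholMap, expMap]
  · simp [cholMap, expMap, not_lt_of_gt h, h.ne, hC i j h]

lemma expMap_cholMap {m : ℕ} (L : Matrix (Fin m) (Fin m) ℝ)
    (hlow : ∀ i j : Fin m, i < j → L i j = 0) (hdiag : ∀ i : Fin m, 0 < L i i) :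
    expMap (cholMap L) = L := by
  ext i j
  rcases lt_trichotomy j i with h | rfl | h
  · simp [cholMap, expMap, h]
  · simp [cholMap, expMap, Real.exp_log (hdiag j)]
  · simp [cholMap, expMap, not_lt_of_gt h, h.ne, hlow i j h]

lemma frobNorm_smul {m : ℕ} (c : ℝ) (A : Matrix (Fin m) (Fin m) ℝ) :
    frobNorm (c • A) = |c| * frobNorm A := by
  unfold frobNorm
  have : ∑ i, ∑ j, ((c • A) i j) ^ 2 = c ^ 2 * ∑ i, ∑ j, (A i j) ^ 2 := by
    simp [Finset.mul_sum, mul_pow]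
  rw [this, Real.sqrt_mul (sq_nonneg c), Real.sqrt_sq_eq_abs]

lemma frobNorm_neg {m : ℕ} (A : Matrix (Fin m) (Fin m) ℝ) : frobNorm (-A) = frobNorm A := by
  unfold frobNorm
  congr 1
  exact Finset.sum_congr rfl fun i _ => Finset.sum_congr rfl fun j _ => by simp

lemma lowTri_blockTriangular {m : ℕ} (L : Matrix (Fin m) (Fin m) ℝ)
    (hlow : ∀ i j : Fin m, i < j → L i j = 0) :
    L.BlockTriangular (OrderDual.toDual : Fin m → (Fin m)ᵒᵈ) :=
  fun i j hij => hlow i j hij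

lemma isUnit_det_lowTri {m : ℕ} (L : Matrix (Fin m) (Fin m) ℝ)
    (hlow : ∀ i j : Fin m, i < j → L i j = 0) (hdiag : ∀ i : Fin m, 0 < L i i) :
    IsUnit L.det := by
  rw [Matrix.det_of_lowerTriangular L (lowTri_blockTriangular L hlow)]
  exact isUnit_iff_ne_zero.mpr (ne_of_gt (Finset.prod_pos fun i _ => hdiag i))

lemma posDef_mul_transpose {m : ℕ} (L : Matrix (Fin m) (Fin m) ℝ)
    (hlow : ∀ i j : Fin m, i < j → L i j = 0) (hdiag : ∀ i : Fin m, 0 < L i i) :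
    (L * Lᵀ).PosDef := by
  have hdet : IsUnit L.det := isUnit_det_lowTri L hlow hdiag
  have hdetT : IsUnit Lᵀ.det := by rwa [Matrix.det_transpose]
  rw [Matrix.posDef_iff_dotProduct_mulVec]
  constructor
  · ext i j
    simp only [Matrix.conjTranspose_apply, Matrix.mul_apply, Matrix.transpose_apply, star_trivial]
    exact Finset.sum_congr rfl fun k _ => mul_comm _ _
  · intro x hx
    have key : dotProduct (star x) ((L * Lᵀ) *ᵥ x) = dotProduct (Lᵀ *ᵥ x) (Lᵀ *ᵥ x) := by
      rw [star_trivial, ← Matrix.mulVec_mulVec, Matrix.dotProduct_mulVec, ← Matrix.mulVec_transpose]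
    rw [key]
    set y := Lᵀ *ᵥ x with hy
    have hyne : y ≠ 0 := by
      intro h0
      apply hx
      have : (Lᵀ)⁻¹ *ᵥ (Lᵀ *ᵥ x) = 0 := by rw [← hy, h0, Matrix.mulVec_zero]
      rwa [Matrix.mulVec_mulVec, Matrix.nonsing_inv_mul _ hdetT, Matrix.one_mulVec] at this
    have h1 : 0 ≤ dotProduct y y := Finset.sum_nonneg fun i _ => mul_self_nonneg _
    exact lt_of_le_of_ne h1 fun h => hyne (dotProduct_self_eq_zero.mp h.symm)

/-- Uniqueness of the Cholesky factorization. -/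
lemma chol_unique {m : ℕ} (L₁ L₂ : Matrix (Fin m) (Fin m) ℝ)
    (hlow₁ : ∀ i j : Fin m, i < j → L₁ i j = 0) (hdiag₁ : ∀ i : Fin m, 0 < L₁ i i)
    (hlow₂ : ∀ i j : Fin m, i < j → L₂ i j = 0) (hdiag₂ : ∀ i : Fin m, 0 < L₂ i i)
    (h : L₁ * L₁ᵀ = L₂ * L₂ᵀ) : L₁ = L₂ := by
  have hdet₁ : IsUnit L₁.det := isUnit_det_lowTri L₁ hlow₁ hdiag₁
  have hdet₂ : IsUnit L₂.det := isUnit_det_lowTri L₂ hlow₂ hdiag₂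
  have hdet₁T : IsUnit L₁ᵀ.det := by rwa [Matrix.det_transpose]
  have hdet₂T : IsUnit L₂ᵀ.det := by rwa [Matrix.det_transpose]
  haveI : Invertible L₂ := L₂.invertibleOfIsUnitDet hdet₂
  set A := L₂⁻¹ * L₁ with hA
  have hL₁eq : L₂ * A = L₁ := Matrix.mul_nonsing_inv_cancel_left L₂ L₁ hdet₂
  have hAlow : A.BlockTriangular (OrderDual.toDual : Fin m → (Fin m)ᵒᵈ) :=
    (Matrix.blockTriangular_inv_of_blockTriangular (lowTri_blockTriangular L₂ hlow₂)).mul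
      (lowTri_blockTriangular L₁ hlow₁)
  have hAA : A * Aᵀ = 1 := by
    rw [hA, Matrix.transpose_mul, Matrix.transpose_nonsing_inv]
    calc L₂⁻¹ * L₁ * (L₁ᵀ * (L₂ᵀ)⁻¹) = L₂⁻¹ * (L₁ * L₁ᵀ) * (L₂ᵀ)⁻¹ := by
          simp only [Matrix.mul_assoc]
      _ = L₂⁻¹ * (L₂ * L₂ᵀ) * (L₂ᵀ)⁻¹ := by rw [h]
      _ = (L₂⁻¹ * L₂) * (L₂ᵀ * (L₂ᵀ)⁻¹) := by simp only [Matrix.mul_assoc]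
      _ = 1 := by rw [Matrix.nonsing_inv_mul _ hdet₂, Matrix.mul_nonsing_inv _ hdet₂T, one_mul]
  haveI : Invertible A := invertibleOfRightInverse (a := A) (b := Aᵀ) hAA
  have hAinv : A⁻¹ = Aᵀ := Matrix.inv_eq_right_inv hAA
  have hATlow : Aᵀ.BlockTriangular (OrderDual.toDual : Fin m → (Fin m)ᵒᵈ) :=
    hAinv ▸ Matrix.blockTriangular_inv_of_blockTriangular hAlow
  -- A is diagonal
  have hAoff : ∀ i j : Fin m, i ≠ j → A i j = 0 := by
    intro i j hij
    rcases lt_or_gt_of_ne hij with hlt | hgt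
    · exact hAlow hlt
    · have := hATlow (show (OrderDual.toDual : Fin m → (Fin m)ᵒᵈ) i < OrderDual.toDual j from hgt)
      simpa using this
  -- diagonal entries positive
  have hAdiag : ∀ i : Fin m, 0 < A i i := by
    intro i
    have hL : L₁ i i = L₂ i i * A i i := by
      rw [← hL₁eq, Matrix.mul_apply]
      rw [Finset.sum_eq_single i]
      · intro k _ hk
        rcases lt_or_gt_of_ne hk with hlt | hgt
        · rw [hAoff k i (ne_of_lt hlt), mul_zero]
        · rw [hlow₂ i k hgt, zero_mul]
      · intro hi; exact absurd (Finset.mem_univ i) hi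
    have h1 := hdiag₁ i
    have h2 := hdiag₂ i
    nlinarith
  -- diagonal entries are 1
  have hA1 : ∀ i : Fin m, A i i = 1 := by
    intro i
    have hsq : A i i * A i i = 1 := by
      have h1 := congrFun (congrFun hAA i) i
      rw [Matrix.mul_apply, Matrix.one_apply_eq] at h1
      rw [← h1, Finset.sum_eq_single i]
      · rfl
      · intro k _ hk
        rw [hAoff i k (Ne.symm hk)]; simp
      · intro hi; exact absurd (Finset.mem_univ i) hi
    nlinarith [hAdiag i]
  have : A = 1 := by
    ext i j
    by_cases hij : i = j
    · subst hij; simp [hA1 i]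
    · simp [hAoff i j hij, Matrix.one_apply_ne hij]
  rw [← hL₁eq, this, mul_one]

/-- For any `S₁, S₂ ∈ Sym⁺(m)`, the curve `γ(t)` defined as the unique element of `Sym⁺(m)`
satisfying `chol(L(γ(t))) = (1−t)·chol(L(S₁)) + t·chol(L(S₂))`, `t ∈ [0,1]`, exists, is
unique, satisfies `γ(0) = S₁`, `γ(1) = S₂`, and
`d_LC(γ(s), γ(t)) = |s − t| · d_LC(S₁, S₂)` for all `s, t ∈ [0,1]`; hence `(Sym⁺(m), d_LC)`
is a geodesic metric space. -/
theorem logCholesky_geodesic (m : ℕ) (hm : 0 < m)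
    (Lfac : Matrix (Fin m) (Fin m) ℝ → Matrix (Fin m) (Fin m) ℝ)
    (hLfac_lower : ∀ S : Matrix (Fin m) (Fin m) ℝ, S.PosDef →
      ∀ i j : Fin m, i < j → Lfac S i j = 0)
    (hLfac_diag : ∀ S : Matrix (Fin m) (Fin m) ℝ, S.PosDef → ∀ i : Fin m, 0 < Lfac S i i)
    (hLfac_mul : ∀ S : Matrix (Fin m) (Fin m) ℝ, S.PosDef → S = Lfac S * (Lfac S)ᵀ)
    (dLC : Matrix (Fin m) (Fin m) ℝ → Matrix (Fin m) (Fin m) ℝ → ℝ)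
    (hdLC : ∀ S₁ S₂, dLC S₁ S₂ = frobNorm (cholMap (Lfac S₁) - cholMap (Lfac S₂)))
    (S₁ S₂ : Matrix (Fin m) (Fin m) ℝ) (hS₁ : S₁.PosDef) (hS₂ : S₂.PosDef) :
    ∃ γ : ℝ → Matrix (Fin m) (Fin m) ℝ,
      -- γ(t) lies in Sym⁺(m) and satisfies the defining equation
      (∀ t ∈ Icc (0 : ℝ) 1, (γ t).PosDef ∧
        cholMap (Lfac (γ t)) = (1 - t) • cholMap (Lfac S₁) + t • cholMap (Lfac S₂)) ∧
      -- γ(t) is the unique such element of Sym⁺(m)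
      (∀ t ∈ Icc (0 : ℝ) 1, ∀ P : Matrix (Fin m) (Fin m) ℝ, P.PosDef →
        cholMap (Lfac P) = (1 - t) • cholMap (Lfac S₁) + t • cholMap (Lfac S₂) → P = γ t) ∧
      γ 0 = S₁ ∧ γ 1 = S₂ ∧
      (∀ s ∈ Icc (0 : ℝ) 1, ∀ t ∈ Icc (0 : ℝ) 1,
        dLC (γ s) (γ t) = |s - t| * dLC S₁ S₂) := by
  set C₁ := cholMap (Lfac S₁) with hC₁
  set C₂ := cholMap (Lfac S₂) with hC₂
  set M : ℝ → Matrix (Fin m) (Fin m) ℝ := fun t => (1 - t) • C₁ + t • C₂ with hM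
  have hMupper : ∀ t, ∀ i j : Fin m, i < j → M t i j = 0 := by
    intro t i j hij
    simp [hM, cholMap_upper _ i j hij, hC₁, hC₂]
  set Λ : ℝ → Matrix (Fin m) (Fin m) ℝ := fun t => expMap (M t) with hΛ
  set γ : ℝ → Matrix (Fin m) (Fin m) ℝ := fun t => Λ t * (Λ t)ᵀ with hγ
  have hΛlow : ∀ t, ∀ i j : Fin m, i < j → Λ t i j = 0 := fun t i j hij => expMap_lower _ i j hij
  have hΛdiag : ∀ t, ∀ i : Fin m, 0 < Λ t i i := fun t i => expMap_diag_pos _ i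
  have hpos : ∀ t, (γ t).PosDef := fun t => posDef_mul_transpose (Λ t) (hΛlow t) (hΛdiag t)
  have hLfacγ : ∀ t, Lfac (γ t) = Λ t := by
    intro t
    refine chol_unique _ _ (hLfac_lower _ (hpos t)) (hLfac_diag _ (hpos t))
      (hΛlow t) (hΛdiag t) ?_
    exact (hLfac_mul _ (hpos t)).symm
  have hcholγ : ∀ t, cholMap (Lfac (γ t)) = M t := by
    intro t
    rw [hLfacγ t, hΛ]
    exact cholMap_expMap (M t) (hMupper t)
  refine ⟨γ, ?_, ?_, ?_, ?_, ?_⟩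
  · exact fun t _ => ⟨hpos t, hcholγ t⟩
  · intro t _ P hP hPeq
    have hLP : Lfac P = Λ t := by
      have := expMap_cholMap (Lfac P) (hLfac_lower P hP) (hLfac_diag P hP)
      rw [← this, hPeq, hΛ]
    rw [hLfac_mul P hP, hLP, hγ]
  · have h0 : Λ 0 = Lfac S₁ := by
      have hM0 : M 0 = C₁ := by simp [hM]
      rw [hΛ]
      show expMap (M 0) = Lfac S₁
      rw [hM0, hC₁]
      exact expMap_cholMap _ (hLfac_lower _ hS₁) (hLfac_diag _ hS₁)
    show Λ 0 * (Λ 0)ᵀ = S₁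
    rw [h0]; exact (hLfac_mul _ hS₁).symm
  · have h1 : Λ 1 = Lfac S₂ := by
      have hM1 : M 1 = C₂ := by simp [hM]
      rw [hΛ]
      show expMap (M 1) = Lfac S₂
      rw [hM1, hC₂]
      exact expMap_cholMap _ (hLfac_lower _ hS₂) (hLfac_diag _ hS₂)
    show Λ 1 * (Λ 1)ᵀ = S₂
    rw [h1]; exact (hLfac_mul _ hS₂).symm
  · intro s _ t _
    rw [hdLC, hdLC, hcholγ s, hcholγ t]
    have hdiff : M s - M t = (s - t) • (C₂ - C₁) := by
      ext i j
      simp only [hM, Matrix.sub_apply, Matrix.add_apply, Matrix.smul_apply, smul_eq_mul]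
      ring
    rw [hdiff, frobNorm_smul]
    have : C₂ - C₁ = -(C₁ - C₂) := by abel
    rw [this, frobNorm_neg]
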